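/- Let y be a word of length n with suffix array SA and LCP array LCP (with LCP[0]=0). A word u is a right-extension-maximal factor of y in the sense that u = y[SA[i]..SA[i]+LCP[i]] or u = y[SA[i]..SA[i]+LCP[i+1]] for some i, whenever u is a factor of y such that there exist two occurrences of u's longest proper prefix in y that are followed by different letters (or one occurrence at the end of y). In particular, every factor u of y that equals the longest proper suffix x[1..m-1] of some minimal absent word x of y arises in this way. -/

import Mathlib

/-- `x` is a factor (contiguous subword) of `y` iff `x <:+: y` (`List.IsInfix`).
A minimal absent word of `y`: a word of length at least 2 that is not a factor
of `y` but all of whose proper factors are factors of `y`. -/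
def MinimalAbsentWord {α : Type*} (y x : List α) : Prop :=
  2 ≤ x.length ∧ ¬ x <:+: y ∧ ∀ f : List α, f <:+: x → f ≠ x → f <:+: y

/-- The length of the longest common prefix of two words. -/
def lcpLen {α : Type*} [DecidableEq α] : List α → List α → ℕ
  | a :: s, b :: t => if a = b then lcpLen s t + 1 else 0
  | _, _ => 0

section Helpers
variable {α : Type*} [LinearOrder α]

lemma list_lt_iff_lex {l l' : List α} : l < l' ↔ List.Lex (· < ·) l l' := Iff.rfl

lemma not_cons_le_nil (x : α) (a : List α) : ¬ (x :: a ≤ ([] : List α)) := by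
  rw [le_iff_lt_or_eq]
  rintro (h | h)
  · exact (fun h' : List.Lex (· < ·) (x :: a) [] => by cases h') h
  · simp at h

lemma cons_le_cons_iff' {x z : α} {a b : List α} (h : x :: a ≤ z :: b) :
    x < z ∨ (x = z ∧ a ≤ b) := by
  rw [le_iff_lt_or_eq] at h
  rcases h with h | h
  · rw [list_lt_iff_lex] at h
    cases h with
    | cons h => exact Or.inr ⟨rfl, le_of_lt h⟩
    | rel h => exact Or.inl h
  · injection h with h1 h2
    exact Or.inr ⟨h1, le_of_eq h2⟩

lemma lcpLen_take (a b : List α) : a.take (lcpLen a b) = b.take (lcpLen a b) := by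
  induction a generalizing b with
  | nil => simp [lcpLen]
  | cons x a ih =>
    cases b with
    | nil => simp [lcpLen]
    | cons z b =>
      by_cases h : x = z
      · simp [lcpLen, h, ih]
      · simp [lcpLen, h]

lemma length_le_lcpLen {p a b : List α} (ha : p <+: a) (hb : p <+: b) :
    p.length ≤ lcpLen a b := by
  induction p generalizing a b with
  | nil => simp
  | cons x p ih =>
    obtain ⟨ta, rfl⟩ := ha
    obtain ⟨tb, rfl⟩ := hb
    simp only [List.cons_append, lcpLen, if_pos rfl, List.length_cons]
    exact Nat.succ_le_succ (ih (List.prefix_append p ta) (List.prefix_append p tb))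

lemma take_eq_take_of_le_lcpLen {a b : List α} {m : ℕ} (h : m ≤ lcpLen a b) :
    a.take m = b.take m := by
  have h1 := lcpLen_take a b
  have h2 : a.take m = (a.take (lcpLen a b)).take m := by
    rw [List.take_take, Nat.min_eq_left h]
  have h3 : b.take m = (b.take (lcpLen a b)).take m := by
    rw [List.take_take, Nat.min_eq_left h]
  rw [h2, h3, h1]

lemma prefix_squeeze {p a b c : List α} (hab : a ≤ b) (hbc : b ≤ c)
    (ha : p <+: a) (hc : p <+: c) : p <+: b := by
  induction p generalizing a b c with
  | nil => exact List.nil_prefix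
  | cons x p ih =>
    obtain ⟨ta, rfl⟩ := ha
    obtain ⟨tc, rfl⟩ := hc
    cases b with
    | nil => exact absurd hab (not_cons_le_nil _ _)
    | cons z b =>
      rcases cons_le_cons_iff' hab with h | ⟨rfl, hab'⟩
      · rcases cons_le_cons_iff' hbc with h2 | ⟨rfl, _⟩
        · exact absurd (h.trans h2) (lt_irrefl _)
        · exact absurd h (lt_irrefl _)
      · rcases cons_le_cons_iff' hbc with h2 | ⟨h2, hbc'⟩
        · exact absurd h2 (lt_irrefl _)
        · exact List.cons_prefix_cons.mpr ⟨rfl,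
            ih hab' hbc' (List.prefix_append p ta) (List.prefix_append p tc)⟩

end Helpers

/-- An occurrence of a word `w` at position `p` in `y` is expressed by
`(y.drop p).take w.length = w`; the letter following an occurrence of
`u.dropLast` at position `p` is `(y.drop (p + (u.length - 1))).head?`
(`none` when the occurrence ends at the end of `y`). -/
theorem stmt_19 {α : Type*} [LinearOrder α] (y : List α)
    (SA LCP : ℕ → ℕ)
    (hSA : ∀ r < y.length, SA r < y.length)
    (hSAinj : ∀ r < y.length, ∀ s < y.length, SA r = SA s → r = s)
    (hsorted : ∀ r s : ℕ, r < s → s < y.length → y.drop (SA r) < y.drop (SA s))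
    (hLCP0 : LCP 0 = 0) (hLCPn : LCP y.length = 0)
    (hLCP : ∀ r, 1 ≤ r → r < y.length →
      LCP r = lcpLen (y.drop (SA (r - 1))) (y.drop (SA r))) :
    (∀ u : List α, u ≠ [] → u <:+: y →
      (∃ j k : ℕ,
        (y.drop j).take (u.length - 1) = u.dropLast ∧
        (y.drop k).take (u.length - 1) = u.dropLast ∧
        (y.drop (j + (u.length - 1))).head? ≠ (y.drop (k + (u.length - 1))).head?) →
      ∃ i < y.length,
        u = (y.drop (SA i)).take (LCP i + 1) ∨
        u = (y.drop (SA i)).take (LCP (i + 1) + 1)) ∧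
    (∀ x : List α, MinimalAbsentWord y x →
      ∃ i < y.length,
        x.tail = (y.drop (SA i)).take (LCP i + 1) ∨
        x.tail = (y.drop (SA i)).take (LCP (i + 1) + 1)) := by
  classical
  have hsurj : ∀ q < y.length, ∃ r, r < y.length ∧ SA r = q := by
    intro q hq
    have hinj : Function.Injective
        (fun r : Fin y.length => (⟨SA r.1, hSA r.1 r.2⟩ : Fin y.length)) := by
      intro a b hab
      exact Fin.ext (hSAinj a.1 a.2 b.1 b.2 (by simpa using congrArg Fin.val hab))
    obtain ⟨r, hr⟩ := (Finite.injective_iff_surjective.mp hinj) ⟨q, hq⟩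
    exact ⟨r.1, r.2, by simpa using congrArg Fin.val hr⟩
  have hmono : ∀ r s : ℕ, r ≤ s → s < y.length →
      y.drop (SA r) ≤ y.drop (SA s) := by
    intro r s hrs hs
    rcases eq_or_lt_of_le hrs with rfl | h
    · exact le_rfl
    · exact le_of_lt (hsorted r s h hs)
  have main : ∀ u : List α, u ≠ [] → u <:+: y →
      (∃ j k : ℕ,
        (y.drop j).take (u.length - 1) = u.dropLast ∧
        (y.drop k).take (u.length - 1) = u.dropLast ∧
        (y.drop (j + (u.length - 1))).head? ≠ (y.drop (k + (u.length - 1))).head?) →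
      ∃ i < y.length,
        u = (y.drop (SA i)).take (LCP i + 1) ∨
        u = (y.drop (SA i)).take (LCP (i + 1) + 1) := by
    rintro u hu hinf ⟨j, k, hj, hk, hjk⟩
    have hm : 1 ≤ u.length := List.length_pos_iff.mpr hu
    have hwlen : u.dropLast.length = u.length - 1 := List.length_dropLast
    have hwu : u.dropLast <+: u := List.dropLast_prefix u
    set c := u.getLast hu with hc
    have huwc : u.dropLast ++ [c] = u := List.dropLast_append_getLast hu
    -- an occurrence of u
    obtain ⟨s, t, hst⟩ := hinf
    have hylen : y.length = s.length + (u.length + t.length) := by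
      rw [← hst]; simp
    have hp : s.length < y.length := by omega
    have hdropp : y.drop s.length = u ++ t := by
      rw [← hst, List.append_assoc, List.drop_left]
    -- the set of ranks whose suffixes have u as a prefix
    set S : Finset ℕ :=
      (Finset.range y.length).filter (fun r => u <+: y.drop (SA r)) with hSdef
    have hmemS : ∀ r, r ∈ S ↔ r < y.length ∧ u <+: y.drop (SA r) := by
      intro r; simp [hSdef]
    have hSne : S.Nonempty := by
      obtain ⟨r0, hr0, hr0e⟩ := hsurj s.length hp
      exact ⟨r0, (hmemS r0).mpr ⟨hr0, by rw [hr0e, hdropp]; exact List.prefix_append u t⟩⟩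
    set a := S.min' hSne with hadef
    set b := S.max' hSne with hbdef
    have haS := S.min'_mem hSne
    have hbS := S.max'_mem hSne
    obtain ⟨han, hau⟩ := (hmemS a).mp haS
    obtain ⟨hbn, hbu⟩ := (hmemS b).mp hbS
    -- case A: the minimum has a predecessor whose suffix starts with u.dropLast
    have doneA : ∀ i, i ∈ S → 1 ≤ i → (∀ r ∈ S, i ≤ r) →
        u.dropLast <+: y.drop (SA (i - 1)) →
        ∃ i' < y.length, u = (y.drop (SA i')).take (LCP i' + 1) ∨
          u = (y.drop (SA i')).take (LCP (i' + 1) + 1) := by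
      intro i hiS h1 hmin hwpre
      obtain ⟨hin, hiu⟩ := (hmemS i).mp hiS
      have hLCPi := hLCP i h1 hin
      have hge : u.length - 1 ≤ lcpLen (y.drop (SA (i - 1))) (y.drop (SA i)) := by
        rw [← hwlen]
        exact length_le_lcpLen hwpre (hwu.trans hiu)
      have hlt : lcpLen (y.drop (SA (i - 1))) (y.drop (SA i)) < u.length := by
        by_contra hcon
        push_neg at hcon
        have h2 : u = (y.drop (SA (i - 1))).take u.length := by
          rw [take_eq_take_of_le_lcpLen hcon]
          exact List.prefix_iff_eq_take.mp hiu
        have hpre : u <+: y.drop (SA (i - 1)) := List.prefix_iff_eq_take.mpr h2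
        have : i - 1 ∈ S := (hmemS (i - 1)).mpr ⟨by omega, hpre⟩
        have := hmin (i - 1) this
        omega
      have hEq : LCP i + 1 = u.length := by omega
      exact ⟨i, hin, Or.inl (by rw [hEq]; exact List.prefix_iff_eq_take.mp hiu)⟩
    -- case B: the maximum has a successor whose suffix starts with u.dropLast
    have doneB : ∀ i, i ∈ S → i + 1 < y.length → (∀ r ∈ S, r ≤ i) →
        u.dropLast <+: y.drop (SA (i + 1)) →
        ∃ i' < y.length, u = (y.drop (SA i')).take (LCP i' + 1) ∨
          u = (y.drop (SA i')).take (LCP (i' + 1) + 1) := by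
      intro i hiS hi1 hmax hwpre
      obtain ⟨hin, hiu⟩ := (hmemS i).mp hiS
      have hLCPi := hLCP (i + 1) (by omega) hi1
      rw [Nat.add_sub_cancel] at hLCPi
      have hge : u.length - 1 ≤ lcpLen (y.drop (SA i)) (y.drop (SA (i + 1))) := by
        rw [← hwlen]
        exact length_le_lcpLen (hwu.trans hiu) hwpre
      have hlt : lcpLen (y.drop (SA i)) (y.drop (SA (i + 1))) < u.length := by
        by_contra hcon
        push_neg at hcon
        have h2 : u = (y.drop (SA (i + 1))).take u.length := by
          rw [← take_eq_take_of_le_lcpLen hcon]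
          exact List.prefix_iff_eq_take.mp hiu
        have hpre : u <+: y.drop (SA (i + 1)) := List.prefix_iff_eq_take.mpr h2
        have : i + 1 ∈ S := (hmemS (i + 1)).mpr ⟨hi1, hpre⟩
        have := hmax (i + 1) this
        omega
      have hEq : LCP (i + 1) + 1 = u.length := by omega
      exact ⟨i, hin, Or.inr (by rw [hEq]; exact List.prefix_iff_eq_take.mp hiu)⟩
    by_cases hm1 : u.length = 1
    · -- single letter: u.dropLast = []
      have hw : u.dropLast = [] := List.eq_nil_of_length_eq_zero (by omega)
      by_cases ha1 : 1 ≤ a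
      · exact doneA a haS ha1 (S.min'_le) (hw ▸ List.nil_prefix)
      · have ha0 : a = 0 := by omega
        rw [ha0] at hau
        refine ⟨0, by omega, Or.inl ?_⟩
        rw [hLCP0]
        have := List.prefix_iff_eq_take.mp hau
        rwa [hm1] at this
    · have hm2 : 2 ≤ u.length := by omega
      by_cases hA : 1 ≤ a ∧ u.dropLast <+: y.drop (SA (a - 1))
      · exact doneA a haS hA.1 (S.min'_le) hA.2
      by_cases hB : b + 1 < y.length ∧ u.dropLast <+: y.drop (SA (b + 1))
      · exact doneB b hbS hB.1 (fun r hr => S.le_max' r hr) hB.2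
      exfalso
      push_neg at hA hB
      have hWS : ∀ r, r < y.length → u.dropLast <+: y.drop (SA r) →
          u <+: y.drop (SA r) := by
        intro r hr hwr
        rcases lt_or_ge r a with hra | hra
        · exfalso
          have ha1 : 1 ≤ a := by omega
          have h1 : y.drop (SA r) ≤ y.drop (SA (a - 1)) :=
            hmono r (a - 1) (by omega) (by omega)
          have h2 : y.drop (SA (a - 1)) ≤ y.drop (SA a) :=
            hmono (a - 1) a (by omega) han
          exact hA ha1 (prefix_squeeze h1 h2 hwr (hwu.trans hau))
        rcases le_or_gt r b with hrb | hrb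
        · exact prefix_squeeze (hmono a r hra hr) (hmono r b hrb hbn) hau hbu
        · exfalso
          have hb1 : b + 1 < y.length := by omega
          have h1 : y.drop (SA b) ≤ y.drop (SA (b + 1)) :=
            hmono b (b + 1) (by omega) hb1
          have h2 : y.drop (SA (b + 1)) ≤ y.drop (SA r) :=
            hmono (b + 1) r (by omega) hr
          exact hB hb1 (prefix_squeeze h1 h2 (hwu.trans hbu) hwr)
      -- hence every occurrence of u.dropLast is followed by the letter c
      have hfol : ∀ p : ℕ, (y.drop p).take (u.length - 1) = u.dropLast →
          (y.drop (p + (u.length - 1))).head? = some c := by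
        intro p hpw
        have hwp : u.dropLast <+: y.drop p :=
          List.prefix_iff_eq_take.mpr (by rw [hwlen]; exact hpw.symm)
        have hwne : u.dropLast ≠ [] := by
          intro h
          rw [h] at hwlen
          simp at hwlen
          omega
        have hdropne : y.drop p ≠ [] := by
          intro h
          exact hwne (List.prefix_nil.mp (h ▸ hwp))
        have hpn : p < y.length := by
          by_contra h
          exact hdropne (List.drop_eq_nil_of_le (by omega))
        obtain ⟨r, hrn, hre⟩ := hsurj p hpn
        have hupre : u <+: y.drop p := by
          have := hWS r hrn (by rw [hre]; exact hwp)
          rwa [hre] at this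
        obtain ⟨rest, hrest⟩ := hupre
        have hsplit : y.drop p = u.dropLast ++ ([c] ++ rest) := by
          rw [← hrest, ← List.append_assoc, huwc]
        have : y.drop (p + (u.length - 1)) = [c] ++ rest := by
          rw [← List.drop_drop, hsplit, ← hwlen, List.drop_left]
        rw [this]
        rfl
      exact hjk ((hfol j hj).trans (hfol k hk).symm)
  refine ⟨main, ?_⟩
  intro x hx
  obtain ⟨hx2, hxnf, hxf⟩ := hx
  have hxne : x ≠ [] := by
    intro h; rw [h] at hx2; simp at hx2
  have hulen : x.tail.length = x.length - 1 := List.length_tail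
  have hune : x.tail ≠ [] := by
    intro h; rw [h] at hulen; simp at hulen; omega
  have hxcons : x.head hxne :: x.tail = x := List.cons_head_tail hxne
  have huy : x.tail <:+: y :=
    hxf x.tail (List.tail_suffix x).isInfix
      (by intro h; have := congrArg List.length h; omega)
  have hdy : x.dropLast <:+: y :=
    hxf x.dropLast (List.dropLast_prefix x).isInfix
      (by intro h; have := congrArg List.length h; rw [List.length_dropLast] at this; omega)
  set c := x.tail.getLast hune with hc
  have hcx : x.tail.dropLast ++ [c] = x.tail := List.dropLast_append_getLast hune
  have hdtail : x.dropLast = x.head hxne :: x.tail.dropLast := by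
    conv_lhs => rw [← hxcons]
    exact List.dropLast_cons_of_ne_nil hune
  have hdx : x.dropLast ++ [c] = x := by
    rw [hdtail, List.cons_append, hcx, hxcons]
  have hwlen : x.tail.dropLast.length = x.tail.length - 1 := List.length_dropLast
  -- occurrences
  obtain ⟨s1, t1, h1⟩ := id huy
  obtain ⟨s2, t2, h2⟩ := id hdy
  have hdrop1 : y.drop s1.length = x.tail ++ t1 := by
    rw [← h1, List.append_assoc, List.drop_left]
  have hdrop2 : y.drop s2.length = x.dropLast ++ t2 := by
    rw [← h2, List.append_assoc, List.drop_left]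
  have hdlen : x.dropLast.length = x.tail.length := by
    rw [List.length_dropLast]; omega
  -- hypothesis j := s1.length
  have hj : (y.drop s1.length).take (x.tail.length - 1) = x.tail.dropLast := by
    rw [hdrop1, List.take_append_of_le_length (by omega), ← List.dropLast_eq_take]
  -- hypothesis k := s2.length + 1
  have hdropk : y.drop (s2.length + 1) = x.tail.dropLast ++ t2 := by
    have : y.drop (s2.length + 1) = (y.drop s2.length).drop 1 := by
      rw [List.drop_drop]
    rw [this, hdrop2, hdtail]
    rfl
  have hk : (y.drop (s2.length + 1)).take (x.tail.length - 1) = x.tail.dropLast := by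
    rw [hdropk, ← hwlen, List.take_left]
  have e2 : x.tail.drop (x.tail.length - 1) = [c] := by
    have h3 : (x.tail.dropLast ++ [c]).drop ((x.tail.dropLast ++ [c]).length - 1) = [c] := by
      have h4 : (x.tail.dropLast ++ [c]).length - 1 = x.tail.dropLast.length := by simp
      rw [h4, List.drop_left]
    rwa [hcx] at h3
  have hfolj : (y.drop (s1.length + (x.tail.length - 1))).head? = some c := by
    have : y.drop (s1.length + (x.tail.length - 1)) = [c] ++ t1 := by
      rw [← List.drop_drop, hdrop1, List.drop_append_of_le_length (by omega), e2]
    rw [this]; rfl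
  have hfolk : (y.drop (s2.length + 1 + (x.tail.length - 1))).head? = some c → False := by
    intro hcon
    have hplus : s2.length + 1 + (x.tail.length - 1) = s2.length + x.dropLast.length := by
      omega
    have hdropm : y.drop (s2.length + 1 + (x.tail.length - 1)) = t2 := by
      rw [hplus, ← List.drop_drop, hdrop2, List.drop_left]
    rw [hdropm] at hcon
    obtain ⟨t2', rfl⟩ : ∃ t2', t2 = c :: t2' := by
      cases t2 with
      | nil => simp at hcon
      | cons z t2' =>
        have hz : z = c := by simpa using hcon
        exact ⟨t2', by rw [hz]⟩
    apply hxnf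
    refine ⟨s2, t2', ?_⟩
    rw [← hdx]
    rw [← h2]
    simp
  obtain ⟨i, hi, hor⟩ := main x.tail hune huy
    ⟨s1.length, s2.length + 1, hj, hk, by
      rw [hfolj]; intro h; exact hfolk h.symm⟩
  exact ⟨i, hi, hor⟩
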